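/- For all integers k, l with 0 ≤ l ≤ k, the following identity holds in ℂ: Σ_{h=0}^{l} Σ_{j=0}^{k−l} i^{h+j} · C(l,h) · C(k−l,j) · E(h+j,h) = i^{k−1} · E(k,l) + δ_{k,l} · i + δ_{l,0}, where C(a,b) is the binomial coefficient, δ is the Kronecker delta, and i = √−1. -/

import Mathlib

open Finset

/-- The Entringer numbers: `E(0,0) = 1`, `E(n,0) = 0` for `n ≥ 1`, and
`E(n,j) = E(n,j-1) + E(n-1,n-j)` for `n ≥ 1`, `1 ≤ j ≤ n`. -/
def entringer : ℕ → ℕ → ℕ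
  | 0, 0 => 1
  | 0, _ + 1 => 0
  | _ + 1, 0 => 0
  | n + 1, j + 1 => entringer (n + 1) j + entringer n (n - j)

lemma pascal_sum (m : ℕ) (g : ℕ → ℂ) :
    ∑ h ∈ range (m+2), ((m+1).choose h : ℂ) * g h
    = ∑ h ∈ range (m+1), (m.choose h : ℂ) * g h
      + ∑ h ∈ range (m+1), (m.choose h : ℂ) * g (h+1) := by
  rw [Finset.sum_range_succ']
  have h1 : ∀ h ∈ range (m+1), ((m+1).choose (h+1) : ℂ) * g (h+1)
      = (m.choose h : ℂ) * g (h+1) + (m.choose (h+1) : ℂ) * g (h+1) := by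
    intro h _; rw [Nat.choose_succ_succ]; push_cast; ring
  rw [Finset.sum_congr rfl h1, Finset.sum_add_distrib]
  have h2 : ∑ h ∈ range (m+1), (m.choose h : ℂ) * g h
      = ∑ h ∈ range (m+1), (m.choose (h+1) : ℂ) * g (h+1) + ((m+1).choose 0 : ℂ) * g 0 := by
    rw [Finset.sum_range_succ' (fun h => (m.choose h : ℂ) * g h) m]
    rw [Finset.sum_range_succ (fun h => (m.choose (h+1) : ℂ) * g (h+1)) m]
    simp [Nat.choose_succ_self]
  rw [h2]; ring

lemma erec (a b : ℕ) : entringer (a+b+1) (a+1) = entringer (a+b+1) a + entringer (a+b) b := by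
  simp only [entringer, Nat.add_sub_cancel_left]

lemma key (m n : ℕ) :
    ∑ h ∈ range (m+2), ∑ j ∈ range (n+1),
        Complex.I ^ (h+j) * ((m+1).choose h : ℂ) * (n.choose j : ℂ) * (entringer (h+j) h : ℂ)
    = (∑ h ∈ range (m+1), ∑ j ∈ range (n+2),
        Complex.I ^ (h+j) * (m.choose h : ℂ) * ((n+1).choose j : ℂ) * (entringer (h+j) h : ℂ))
      + Complex.I * ∑ h ∈ range (n+1), ∑ j ∈ range (m+1),
        Complex.I ^ (h+j) * (n.choose h : ℂ) * (m.choose j : ℂ) * (entringer (h+j) h : ℂ) := by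
  set K := ∑ h ∈ range (m+1), ∑ j ∈ range (n+1),
      (m.choose h : ℂ) * (n.choose j : ℂ) * (Complex.I ^ (h+j) *
        ((entringer (h+j) h : ℂ) + Complex.I * (entringer (h+j+1) h : ℂ)
          + Complex.I * (entringer (h+j) j : ℂ))) with hK
  have hL : ∑ h ∈ range (m+2), ∑ j ∈ range (n+1),
      Complex.I ^ (h+j) * ((m+1).choose h : ℂ) * (n.choose j : ℂ) * (entringer (h+j) h : ℂ) = K := by
    have h1 : ∀ h, ∑ j ∈ range (n+1),
        Complex.I ^ (h+j) * ((m+1).choose h : ℂ) * (n.choose j : ℂ) * (entringer (h+j) h : ℂ)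
        = ((m+1).choose h : ℂ) * ∑ j ∈ range (n+1),
            Complex.I ^ (h+j) * (n.choose j : ℂ) * (entringer (h+j) h : ℂ) := by
      intro h; rw [Finset.mul_sum]; exact Finset.sum_congr rfl fun j _ => by ring
    simp only [h1]
    rw [pascal_sum m (fun h => ∑ j ∈ range (n+1),
        Complex.I ^ (h+j) * (n.choose j : ℂ) * (entringer (h+j) h : ℂ)), hK,
      ← Finset.sum_add_distrib]
    refine Finset.sum_congr rfl fun h _ => ?_
    rw [Finset.mul_sum, Finset.mul_sum, ← Finset.sum_add_distrib]
    refine Finset.sum_congr rfl fun j _ => ?_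
    have e1 : (entringer (h+1+j) (h+1) : ℂ)
        = (entringer (h+j+1) h : ℂ) + (entringer (h+j) j : ℂ) := by
      rw [show h+1+j = h+j+1 from by omega, erec]; push_cast; ring
    rw [e1]; ring
  have hR1 : ∑ h ∈ range (m+1), ∑ j ∈ range (n+2),
      Complex.I ^ (h+j) * (m.choose h : ℂ) * ((n+1).choose j : ℂ) * (entringer (h+j) h : ℂ)
      = ∑ h ∈ range (m+1), ∑ j ∈ range (n+1),
          (m.choose h : ℂ) * (n.choose j : ℂ) * (Complex.I ^ (h+j) *
            ((entringer (h+j) h : ℂ) + Complex.I * (entringer (h+j+1) h : ℂ))) := by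
    refine Finset.sum_congr rfl fun h _ => ?_
    have h1 : ∑ j ∈ range (n+2),
        Complex.I ^ (h+j) * (m.choose h : ℂ) * ((n+1).choose j : ℂ) * (entringer (h+j) h : ℂ)
        = ∑ j ∈ range (n+2), ((n+1).choose j : ℂ) *
            ((m.choose h : ℂ) * (Complex.I ^ (h+j) * (entringer (h+j) h : ℂ))) :=
      Finset.sum_congr rfl fun j _ => by ring
    rw [h1, pascal_sum n (fun j => (m.choose h : ℂ) * (Complex.I ^ (h+j) * (entringer (h+j) h : ℂ))),
      ← Finset.sum_add_distrib]
    exact Finset.sum_congr rfl fun j _ => by ring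
  have hR2 : Complex.I * ∑ h ∈ range (n+1), ∑ j ∈ range (m+1),
      Complex.I ^ (h+j) * (n.choose h : ℂ) * (m.choose j : ℂ) * (entringer (h+j) h : ℂ)
      = ∑ h ∈ range (m+1), ∑ j ∈ range (n+1),
          (m.choose h : ℂ) * (n.choose j : ℂ) *
            (Complex.I ^ (h+j) * (Complex.I * (entringer (h+j) j : ℂ))) := by
    rw [Finset.sum_comm, Finset.mul_sum]
    refine Finset.sum_congr rfl fun h _ => ?_
    rw [Finset.mul_sum]
    refine Finset.sum_congr rfl fun j _ => ?_
    rw [show j + h = h + j from add_comm j h]; ring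
  rw [hL, hR1, hR2, hK, ← Finset.sum_add_distrib]
  refine Finset.sum_congr rfl fun h _ => ?_
  rw [← Finset.sum_add_distrib]
  exact Finset.sum_congr rfl fun j _ => by ring

lemma entringer_zero (n : ℕ) : entringer n 0 = if n = 0 then 1 else 0 := by
  cases n <;> simp [entringer]

/-- the Entringer-number generating identity in ℂ:
`Σ_{h=0}^{l} Σ_{j=0}^{k-l} i^{h+j} C(l,h) C(k-l,j) E(h+j,h)
  = i^{k-1} E(k,l) + δ_{k,l} i + δ_{l,0}`. -/
theorem stmt8 (k l : ℕ) (hlk : l ≤ k) :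
    ∑ h ∈ Finset.range (l + 1), ∑ j ∈ Finset.range (k - l + 1),
        Complex.I ^ (h + j) * (l.choose h : ℂ) * ((k - l).choose j : ℂ)
          * (entringer (h + j) h : ℂ)
      = Complex.I ^ ((k : ℤ) - 1) * (entringer k l : ℂ)
          + (if k = l then Complex.I else 0) + (if l = 0 then 1 else 0) := by
  induction k generalizing l with
  | zero =>
    interval_cases l
    simp [entringer, Finset.sum_range_one, zpow_neg, Complex.inv_I]
  | succ k ihk =>
    revert hlk
    induction l with
    | zero =>
      intro _
      rw [Finset.sum_range_one, Nat.sub_zero]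
      rw [Finset.sum_eq_single 0]
      · simp [entringer, entringer_zero]
      · intro b _ hb
        simp [entringer_zero, hb]
      · intro h; simp at h
    | succ l ihl =>
      intro hl
      have hl' : l ≤ k := by omega
      rw [show k + 1 - (l + 1) = k - l from by omega,
        show l + 1 + 1 = l + 2 from rfl, key l (k - l)]
      have h1 := ihl (by omega)
      rw [show k + 1 - l = k - l + 1 from by omega,
        show k - l + 1 + 1 = k - l + 2 from rfl] at h1
      have h2 := ihk (k - l) (by omega)
      rw [show k - (k - l) = l from by omega] at h2
      rw [h1, h2]
      have eE : (entringer (k+1) (l+1) : ℂ)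
          = (entringer (k+1) l : ℂ) + (entringer k (k-l) : ℂ) := by
        simp only [entringer]; push_cast; ring
      have hp : Complex.I ^ ((↑(k+1) : ℤ) - 1) = Complex.I * Complex.I ^ ((k:ℤ) - 1) := by
        rw [show ((↑(k+1):ℤ) - 1) = 1 + ((k:ℤ) - 1) by push_cast; ring,
          zpow_add₀ Complex.I_ne_zero, zpow_one]
      have e1 : (if k + 1 = l then Complex.I else 0) = 0 := if_neg (by omega)
      have e2 : (if k = k - l then Complex.I else 0)
          = Complex.I * (if l = 0 then (1:ℂ) else 0) := by
        by_cases h : l = 0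
        · rw [if_pos (by omega), if_pos h, mul_one]
        · rw [if_neg (by omega), if_neg h, mul_zero]
      have e3 : (if k - l = 0 then (1:ℂ) else 0) = (if k = l then (1:ℂ) else 0) := by
        by_cases h : k = l
        · rw [if_pos (by omega), if_pos h]
        · rw [if_neg (by omega), if_neg h]
      have e4 : (if k + 1 = l + 1 then Complex.I else 0)
          = Complex.I * (if k = l then (1:ℂ) else 0) := by
        by_cases h : k = l
        · rw [if_pos (by omega), if_pos h, mul_one]
        · rw [if_neg (by omega), if_neg h, mul_zero]
      rw [eE, hp, e1, e2, e3, e4, if_neg (by omega : ¬ l + 1 = 0)]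
      linear_combination (if l = 0 then (1:ℂ) else 0) * Complex.I_mul_I
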